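/- Assume the degenerate Hecke relations for operators 𝒟₁,…,𝒟_N and transpositions K_{i,i+1}. Then for any constant c, the symmetric polynomial S(u) = Π_{i=1}^N (𝒟_i + u) commutes with every K_{i,i+1}, i.e., K_{i,i+1} Π_{j=1}^N (𝒟_j + u) = Π_{j=1}^N (𝒟_j + u) K_{i,i+1} for all 1 ≤ i ≤ N−1. -/

import Mathlib

open Polynomial

/-- Abstract Sekiguchi commutation: if operators `D 0, …, D (N−1)` and involutions
`K i` (representing `K_{i,i+1}`) satisfy the degenerate Hecke relations and the `D i` mutually
commute, then `S(u) = Π_{j=1}^N (D_j + u)`, viewed as a polynomial in the central variable `u`,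
commutes with every `K i`. -/
theorem sekiguchi_commutes_with_transpositions
    (A : Type) [Ring A] (N : ℕ) (D K : ℕ → A)
    (hKK : ∀ i, i + 1 < N → K i * K i = 1)
    (hHecke : ∀ i, i + 1 < N → K i * D (i + 1) - D i * K i = -1)
    (hKD : ∀ i j, j + 1 < N → i ≠ j → i ≠ j + 1 → K j * D i = D i * K j)
    (hDD : ∀ i j, D i * D j = D j * D i)
    (i : ℕ) (hi : i + 1 < N) :
    Polynomial.C (K i) * ((List.range N).map (fun j => Polynomial.C (D j) + Polynomial.X)).prod
      = ((List.range N).map (fun j => Polynomial.C (D j) + Polynomial.X)).prod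
          * Polynomial.C (K i) := by
  set P : ℕ → A[X] := fun j => Polynomial.C (D j) + Polynomial.X with hP
  have hK := hKK i hi
  -- h1 : K i * D (i+1) = D i * K i - 1
  have h1 : K i * D (i + 1) = D i * K i - 1 := by
    have h := hHecke i hi; rw [sub_eq_iff_eq_add] at h; rw [h]; abel
  -- h2 : K i * D i = D (i+1) * K i + 1
  have h2 : K i * D i = D (i + 1) * K i + 1 := by
    have e : K i * (K i * D (i + 1)) * K i = K i * (D i * K i - 1) * K i := by rw [h1]
    calc K i * D i = K i * D i * (K i * K i) := by rw [hK, mul_one]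
      _ = K i * (D i * K i - 1) * K i + K i * K i := by noncomm_ring
      _ = K i * (K i * D (i + 1)) * K i + 1 := by rw [← e, hK]
      _ = (K i * K i) * D (i + 1) * K i + 1 := by noncomm_ring
      _ = D (i + 1) * K i + 1 := by rw [hK, one_mul]
  -- scalar commutations
  have hsum : K i * (D i + D (i + 1)) = (D i + D (i + 1)) * K i := by
    rw [mul_add, add_mul, h1, h2]; abel
  have hprod : K i * (D i * D (i + 1)) = (D i * D (i + 1)) * K i := by
    calc K i * (D i * D (i + 1)) = (K i * D i) * D (i + 1) := by rw [mul_assoc]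
      _ = (D (i + 1) * K i + 1) * D (i + 1) := by rw [h2]
      _ = D (i + 1) * (K i * D (i + 1)) + D (i + 1) := by noncomm_ring
      _ = D (i + 1) * (D i * K i - 1) + D (i + 1) := by rw [h1]
      _ = (D (i + 1) * D i) * K i := by noncomm_ring
      _ = (D i * D (i + 1)) * K i := by rw [hDD]
  -- commute with single factor for j ∉ {i, i+1}
  have hfac : ∀ j, j ≠ i → j ≠ i + 1 → Commute (Polynomial.C (K i)) (P j) := by
    intro j hj1 hj2
    have := hKD j i hi hj1 hj2
    simp only [hP]
    exact Commute.add_right (by simpa only [C_mul, Commute, SemiconjBy] using congrArg Polynomial.C this)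
      (Polynomial.commute_X (C (K i))).symm
  -- commute with the pair
  have hpair : Commute (Polynomial.C (K i)) (P i * P (i + 1)) := by
    have e : P i * P (i + 1)
        = Polynomial.C (D i * D (i + 1)) + Polynomial.C (D i + D (i + 1)) * Polynomial.X
          + Polynomial.X ^ 2 := by
      simp only [hP, C_mul, C_add]
      have hx : (Polynomial.X : A[X]) * Polynomial.C (D (i + 1))
          = Polynomial.C (D (i + 1)) * Polynomial.X := (Polynomial.commute_X _)
      noncomm_ring
      rw [hx]; abel
    rw [e]
    refine Commute.add_right (Commute.add_right ?_ ?_) ?_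
    · simpa only [C_mul, Commute, SemiconjBy] using congrArg Polynomial.C hprod
    · exact Commute.mul_right (by simpa only [C_mul, Commute, SemiconjBy] using congrArg Polynomial.C hsum)
        (Polynomial.commute_X _).symm
    · exact ((Polynomial.commute_X (C (K i))).symm).pow_right 2
  -- split range
  have hsplit : List.range N
      = List.range i ++ [i, i + 1] ++ (List.range (N - (i + 2))).map (fun k => (i + 2) + k) := by
    have hN : N = (i + 2) + (N - (i + 2)) := by omega
    rw [hN, List.range_add, List.range_succ, List.range_succ]
    simp [List.append_assoc]
  have key : Commute (Polynomial.C (K i)) (((List.range N).map P).prod) := by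
    rw [hsplit]
    simp only [List.map_append, List.prod_append, List.map_map, List.map_cons, List.map_nil,
      List.prod_cons, List.prod_nil, mul_one]
    refine Commute.mul_right (Commute.mul_right ?_ hpair) ?_
    · exact Commute.list_prod_right _ _ (by
        intro x hx
        simp only [List.mem_map, List.mem_range] at hx
        obtain ⟨j, hj, rfl⟩ := hx
        exact hfac j (by omega) (by omega))
    · exact Commute.list_prod_right _ _ (by
        intro x hx
        simp only [List.mem_map, List.mem_range, Function.comp] at hx
        obtain ⟨j, hj, rfl⟩ := hx
        exact hfac _ (by omega) (by omega))
  exact key
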